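/- For every m >= 2 and t >= 0 with 5t+2 < 5m/2, the generalized Petersen graph GP(5m, 5t+2) admits a perfect 2-coloring with parameter matrix [[0,3],[2,1]]; explicitly, the map T with T(a_{5i+1}) = T(a_{5i+4}) = T(b_{5i+2}) = T(b_{5i+3}) = 1 and T of all other vertices equal to 2 is such a coloring. -/
import Mathlib


/-- The generalized Petersen graph `GP n k`. Vertices are pairs `(s, i)` with
`s : Bool` (`false` = outer vertex `aᵢ`, `true` = inner vertex `bᵢ`) and `i : ZMod n`.
Edges: `aᵢ aᵢ₊₁`, `aᵢ bᵢ`, `bᵢ bᵢ₊ₖ`. -/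
def GP (n k : ℕ) : SimpleGraph (Bool × ZMod n) :=
  SimpleGraph.fromRel (fun v w =>
    (v.1 = false ∧ w.1 = false ∧ w.2 = v.2 + 1) ∨
    (v.1 = false ∧ w.1 = true ∧ w.2 = v.2) ∨
    (v.1 = true ∧ w.1 = true ∧ w.2 = v.2 + (k : ZMod n)))

/-- `T` is a perfect 2-coloring of `G` with parameter matrix `A`:
`T` is surjective onto the two colors (color `0` = white = "1", color `1` = black = "2"),
and every vertex of color `i` has exactly `A i j` neighbors of color `j`. -/
def IsPerfectColoring {V : Type*} (G : SimpleGraph V) (T : V → Fin 2)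
    (A : Matrix (Fin 2) (Fin 2) ℕ) : Prop :=
  Function.Surjective T ∧
  ∀ v : V, ∀ j : Fin 2, {w | G.Adj v w ∧ T w = j}.ncard = A (T v) j

lemma count3 {V : Type*} [DecidableEq V] (w1 w2 w3 : V) (h12 : w1 ≠ w2) (h13 : w1 ≠ w3)
    (h23 : w2 ≠ w3) (P : V → Prop) [DecidablePred P] :
    {w | (w = w1 ∨ w = w2 ∨ w = w3) ∧ P w}.ncard =
      (if P w1 then 1 else 0) + (if P w2 then 1 else 0) + (if P w3 then 1 else 0) := by
  have hset : {w | (w = w1 ∨ w = w2 ∨ w = w3) ∧ P w}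
      = ↑(({w1, w2, w3} : Finset V).filter P) := by
    ext w; simp [Finset.mem_filter, and_comm]
  rw [hset, Set.ncard_coe_finset]
  rw [Finset.filter_insert, Finset.filter_insert, Finset.filter_singleton]
  split_ifs <;>
    simp_all [Finset.card_insert_of_notMem, Finset.mem_insert, h12, h13, h23]

lemma GP_adj_outer {n k : ℕ} (hn : 3 ≤ n) (i : ZMod n) (w : Bool × ZMod n) :
    (GP n k).Adj (false, i) w ↔ w = (false, i + 1) ∨ w = (false, i - 1) ∨ w = (true, i) := by
  haveI : NeZero n := ⟨by omega⟩
  haveI : Fact (1 < n) := ⟨by omega⟩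
  have h1 : (1 : ZMod n) ≠ 0 := one_ne_zero
  rw [GP, SimpleGraph.fromRel_adj]
  constructor
  · rintro ⟨hne, (⟨e1, e2, e3⟩ | ⟨e1, e2, e3⟩ | ⟨e1, e2, e3⟩) |
      (⟨e1, e2, e3⟩ | ⟨e1, e2, e3⟩ | ⟨e1, e2, e3⟩)⟩ <;> simp only at e1 e2 e3 ⊢
    · left; rw [Prod.ext_iff]; exact ⟨e2, e3⟩
    · right; right; rw [Prod.ext_iff]; exact ⟨e2, e3⟩
    · exact absurd e1 (by simp)
    · right; left; rw [Prod.ext_iff]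
      exact ⟨e1, eq_sub_of_add_eq e3.symm⟩
    · exact absurd e2 (by simp)
    · exact absurd e2 (by simp)
  · rintro (h | h | h) <;> subst h
    · refine ⟨fun hc => ?_, Or.inl (Or.inl ⟨rfl, rfl, rfl⟩)⟩
      rw [Prod.mk.injEq] at hc
      exact h1 (left_eq_add.mp hc.2)
    · refine ⟨fun hc => ?_, Or.inr (Or.inl ⟨rfl, rfl, by ring⟩)⟩
      rw [Prod.mk.injEq] at hc
      exact h1 (sub_eq_self.mp hc.2.symm)
    · refine ⟨fun hc => ?_, Or.inl (Or.inr (Or.inl ⟨rfl, rfl, rfl⟩))⟩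
      rw [Prod.mk.injEq] at hc
      exact absurd hc.1 (by simp)

lemma GP_adj_inner {n k : ℕ} (hn : 3 ≤ n) (hk0 : 0 < k) (hkn : k < n) (i : ZMod n)
    (w : Bool × ZMod n) :
    (GP n k).Adj (true, i) w ↔
      w = (true, i + (k : ZMod n)) ∨ w = (true, i - (k : ZMod n)) ∨ w = (false, i) := by
  haveI : NeZero n := ⟨by omega⟩
  haveI : Fact (1 < n) := ⟨by omega⟩
  have hkz : (k : ZMod n) ≠ 0 := by
    rw [Ne, ZMod.natCast_eq_zero_iff]
    intro h
    exact absurd (Nat.le_of_dvd hk0 h) (by omega)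
  rw [GP, SimpleGraph.fromRel_adj]
  constructor
  · rintro ⟨hne, (⟨e1, e2, e3⟩ | ⟨e1, e2, e3⟩ | ⟨e1, e2, e3⟩) |
      (⟨e1, e2, e3⟩ | ⟨e1, e2, e3⟩ | ⟨e1, e2, e3⟩)⟩ <;> simp only at e1 e2 e3 ⊢
    · exact absurd e1 (by simp)
    · exact absurd e1 (by simp)
    · left; rw [Prod.ext_iff]; exact ⟨e2, e3⟩
    · exact absurd e2 (by simp)
    · right; right; rw [Prod.ext_iff]; exact ⟨e1, e3.symm⟩
    · right; left; rw [Prod.ext_iff]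
      exact ⟨e1, eq_sub_of_add_eq e3.symm⟩
  · rintro (h | h | h) <;> subst h
    · refine ⟨fun hc => ?_, Or.inl (Or.inr (Or.inr ⟨rfl, rfl, rfl⟩))⟩
      rw [Prod.mk.injEq] at hc
      exact hkz (left_eq_add.mp hc.2)
    · refine ⟨fun hc => ?_, Or.inr (Or.inr (Or.inr ⟨rfl, rfl, by ring⟩))⟩
      rw [Prod.mk.injEq] at hc
      exact hkz (sub_eq_self.mp hc.2.symm)
    · refine ⟨fun hc => ?_, Or.inr (Or.inr (Or.inl ⟨rfl, rfl, rfl⟩))⟩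
      rw [Prod.mk.injEq] at hc
      exact absurd hc.1 (by simp)

lemma val_add_mod5 {n : ℕ} [NeZero n] (h5 : 5 ∣ n) (i : ZMod n) (c : ℕ) :
    (i + (c : ZMod n)).val % 5 = (i.val + c) % 5 := by
  rw [ZMod.val_add, ZMod.val_natCast, Nat.mod_mod_of_dvd _ h5, Nat.add_mod,
    Nat.mod_mod_of_dvd c h5, ← Nat.add_mod]

theorem stmt_10 (m t : ℕ) (hm : 2 ≤ m) (hk : 2 * (5 * t + 2) < 5 * m) :
    IsPerfectColoring (GP (5 * m) (5 * t + 2))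
      (fun v =>
        if (v.1 = false ∧ (v.2.val % 5 = 1 ∨ v.2.val % 5 = 4)) ∨
           (v.1 = true ∧ (v.2.val % 5 = 2 ∨ v.2.val % 5 = 3)) then 0 else 1)
      !![0, 3; 2, 1] := by
  set n := 5 * m with hn
  set k := 5 * t + 2 with hkdef
  haveI : NeZero n := ⟨by omega⟩
  haveI : Fact (1 < n) := ⟨by omega⟩
  have h5 : (5 : ℕ) ∣ n := ⟨m, rfl⟩
  constructor
  · intro j
    fin_cases j
    · refine ⟨(false, (1 : ZMod n)), ?_⟩
      simp [ZMod.val_one]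
    · refine ⟨(false, (0 : ZMod n)), ?_⟩
      simp
  · rintro ⟨s, i⟩ j
    have hv1 : (i + 1).val % 5 = (i.val + 1) % 5 := by
      have := val_add_mod5 h5 i 1; simpa using this
    have hvm1 : (i - 1).val % 5 = (i.val + 4) % 5 := by
      have he : i - 1 = i + ((n - 1 : ℕ) : ZMod n) := by
        rw [Nat.cast_sub (by omega), ZMod.natCast_self]
        push_cast; ring
      rw [he, val_add_mod5 h5]
      omega
    have hvk : (i + ((k : ℕ) : ZMod n)).val % 5 = (i.val + 2) % 5 := by
      rw [val_add_mod5 h5]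
      omega
    have hvmk : (i - ((k : ℕ) : ZMod n)).val % 5 = (i.val + 3) % 5 := by
      have he : i - (k : ZMod n) = i + ((n - k : ℕ) : ZMod n) := by
        rw [Nat.cast_sub (by omega), ZMod.natCast_self]
        push_cast; ring
      rw [he, val_add_mod5 h5]
      omega
    have hr : i.val % 5 = 0 ∨ i.val % 5 = 1 ∨ i.val % 5 = 2 ∨ i.val % 5 = 3 ∨
        i.val % 5 = 4 := by omega
    cases s
    · -- outer vertex
      have d12 : ((false, i + 1) : Bool × ZMod n) ≠ (false, i - 1) := by
        intro h
        rw [Prod.mk.injEq] at h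
        have h2 : ((2 : ℕ) : ZMod n) = 0 := by push_cast; linear_combination h.2
        rw [ZMod.natCast_eq_zero_iff] at h2
        exact absurd (Nat.le_of_dvd (by norm_num) h2) (by omega)
      have d13 : ((false, i + 1) : Bool × ZMod n) ≠ (true, i) := by simp
      have d23 : ((false, i - 1) : Bool × ZMod n) ≠ (true, i) := by simp
      have hset : ∀ P : Bool × ZMod n → Prop,
          {w | (GP n k).Adj (false, i) w ∧ P w} =
          {w | (w = (false, i + 1) ∨ w = (false, i - 1) ∨ w = (true, i)) ∧ P w} := by
        intro P; ext w; rw [Set.mem_setOf_eq, Set.mem_setOf_eq,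
          GP_adj_outer (by omega) i w]
      rw [hset, count3 _ _ _ d12 d13 d23]
      fin_cases j <;> rcases hr with hr | hr | hr | hr | hr <;>
        simp [hv1, hvm1, Nat.add_mod, hr, Fin.ext_iff, Matrix.cons_val_zero,
          Matrix.cons_val_one, Matrix.head_cons]
    · -- inner vertex
      have d12 : ((true, i + (k : ZMod n)) : Bool × ZMod n) ≠ (true, i - (k : ZMod n)) := by
        intro h
        rw [Prod.mk.injEq] at h
        have h2 : ((2 * k : ℕ) : ZMod n) = 0 := by
          rw [two_mul, Nat.cast_add]; linear_combination h.2
        rw [ZMod.natCast_eq_zero_iff] at h2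
        exact absurd (Nat.le_of_dvd (by omega) h2) (by omega)
      have d13 : ((true, i + (k : ZMod n)) : Bool × ZMod n) ≠ (false, i) := by simp
      have d23 : ((true, i - (k : ZMod n)) : Bool × ZMod n) ≠ (false, i) := by simp
      have hset : ∀ P : Bool × ZMod n → Prop,
          {w | (GP n k).Adj (true, i) w ∧ P w} =
          {w | (w = (true, i + (k : ZMod n)) ∨ w = (true, i - (k : ZMod n)) ∨
            w = (false, i)) ∧ P w} := by
        intro P; ext w; rw [Set.mem_setOf_eq, Set.mem_setOf_eq,
          GP_adj_inner (by omega) (by omega) (by omega) i w]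
      rw [hset, count3 _ _ _ d12 d13 d23]
      fin_cases j <;> rcases hr with hr | hr | hr | hr | hr <;>
        simp [hvk, hvmk, Nat.add_mod, hr, Fin.ext_iff, Matrix.cons_val_zero,
          Matrix.cons_val_one, Matrix.head_cons]
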